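/- Let A be an associative unital algebra over ℂ and let a, b ∈ A satisfy a·b − b·a = b². Then for every complex number λ and every integer m ≥ 1 one has the division identity a^m = Q_{m−1}(λ)·(a − λ·b) + λ(λ+1)⋯(λ+m−1) · b^m, where Q_{m−1}(λ) := ∑_{i=0}^{m−1} (λ(λ+1)⋯(λ+i−1)) · a^{m−1−i}·b^i (the i = 0 term being a^{m−1}, with empty product equal to 1). -/

import Mathlib

/-- Division identity: in a unital associative `ℂ`-algebra with `ab - ba = b²`, for every
`λ : ℂ` and `m ≥ 1`:
`a^m = Q_{m-1}(λ)(a - λ b) + λ(λ+1)⋯(λ+m-1) b^m` where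
`Q_{m-1}(λ) = ∑_{i=0}^{m-1} λ(λ+1)⋯(λ+i-1) a^{m-1-i} b^i`. -/
theorem stmt_12 {A : Type*} [Ring A] [Algebra ℂ A] (a b : A)
    (h : a * b - b * a = b ^ 2) (lam : ℂ) (m : ℕ) (hm : 1 ≤ m) :
    a ^ m =
      (∑ i ∈ Finset.range m,
          (∏ u ∈ Finset.range i, (lam + u)) • (a ^ (m - 1 - i) * b ^ i)) * (a - lam • b)
        + (∏ u ∈ Finset.range m, (lam + u)) • b ^ m := by
  have hab : a * b = b ^ 2 + b * a := sub_eq_iff_eq_add.mp h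
  have aux : ∀ i : ℕ, a * b ^ i = b ^ i * a + (i : ℂ) • b ^ (i + 1) := by
    intro i
    induction i with
    | zero => simp
    | succ n ih =>
      calc a * b ^ (n + 1) = (a * b ^ n) * b := by rw [pow_succ, mul_assoc]
        _ = (b ^ n * a + (n : ℂ) • b ^ (n + 1)) * b := by rw [ih]
        _ = b ^ n * (a * b) + (n : ℂ) • b ^ (n + 2) := by
            rw [add_mul, smul_mul_assoc, mul_assoc, ← pow_succ]
        _ = b ^ (n + 2) + b ^ (n + 1) * a + (n : ℂ) • b ^ (n + 2) := by
            rw [hab, mul_add, ← pow_add, ← mul_assoc, ← pow_succ]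
        _ = b ^ (n + 1) * a + ((n : ℂ) + 1) • b ^ (n + 2) := by
            rw [add_smul, one_smul]; abel
        _ = b ^ (n + 1) * a + ((n + 1 : ℕ) : ℂ) • b ^ (n + 1 + 1) := by push_cast; ring_nf
  induction m, hm using Nat.le_induction with
  | base =>
      simp
  | succ m hm ih =>
      have hsum : (∑ i ∈ Finset.range (m + 1),
            (∏ u ∈ Finset.range i, (lam + u)) • (a ^ (m + 1 - 1 - i) * b ^ i))
          = a * (∑ i ∈ Finset.range m,
            (∏ u ∈ Finset.range i, (lam + u)) • (a ^ (m - 1 - i) * b ^ i))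
            + (∏ u ∈ Finset.range m, (lam + u)) • b ^ m := by
        rw [Finset.sum_range_succ, Finset.mul_sum]
        congr 1
        · apply Finset.sum_congr rfl
          intro i hi
          have hi' : i < m := Finset.mem_range.mp hi
          have : m + 1 - 1 - i = (m - 1 - i) + 1 := by omega
          rw [this, pow_succ', mul_smul_comm, mul_assoc]
        · simp
      rw [hsum, Finset.prod_range_succ]
      have lhs : a ^ (m + 1) = a * a ^ m := (pow_succ' a m)
      rw [lhs, ih]
      set P := ∏ u ∈ Finset.range m, (lam + u) with hP
      set S := ∑ i ∈ Finset.range m,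
            (∏ u ∈ Finset.range i, (lam + u)) • (a ^ (m - 1 - i) * b ^ i) with hS
      rw [mul_add, ← mul_assoc, mul_smul_comm, aux m]
      rw [add_mul, smul_mul_assoc]
      have expand : b ^ m * (a - lam • b) = b ^ m * a - lam • b ^ (m + 1) := by
        rw [mul_sub, mul_smul_comm, ← pow_succ]
      rw [expand, pow_succ]
      rw [smul_add, smul_smul, smul_sub, smul_smul]
      rw [show P * (lam + (m : ℂ)) = P * lam + P * m by ring, add_smul]
      abel
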